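/- Let g ≥ 2 and let (x_n) be a sequence of integers converging in the ring ℤ_g of g-adic integers (the inverse limit of ℤ/g^iℤ) to a limit x that is not an integer. Then the word lengths ℓ_g(x_n) diverge to infinity. -/

import Mathlib

/-- The generating set `S_g = {± g^k : k ∈ ℕ}` in `ℤ`. -/
def Sg (g : ℤ) : Set ℤ := {x | ∃ n : ℕ, x = g ^ n ∨ x = -g ^ n}

/-- The word length of `k` with respect to `S_g`. -/
noncomputable def wlen (g : ℤ) (k : ℤ) : ℕ :=
  sInf {m | ∃ l : List ℤ, (∀ x ∈ l, x ∈ Sg g) ∧ l.length = m ∧ l.sum = k}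

/-- Every integer is a sum of elements of `Sg g`. -/
lemma Sg.rep_any (g k : ℤ) : ∃ l : List ℤ, (∀ x ∈ l, x ∈ Sg g) ∧ l.sum = k := by
  refine ⟨List.replicate k.natAbs (if 0 ≤ k then 1 else -1), ?_, ?_⟩
  · intro e he
    rw [List.mem_replicate] at he
    rcases he with ⟨-, rfl⟩
    by_cases h : 0 ≤ k <;> simp [h, Sg] <;> exact ⟨0, by simp⟩
  · rw [List.sum_replicate, nsmul_eq_mul]
    split_ifs with h
    · rw [mul_one]; omega
    · rw [mul_neg_one]; omega

lemma list_dvd_sub_filter (d : ℤ) (p : ℤ → Bool) :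
    ∀ l : List ℤ, (∀ e ∈ l, p e = false → d ∣ e) → d ∣ l.sum - (l.filter p).sum := by
  intro l
  induction l with
  | nil => simp
  | cons a l ih =>
    intro h
    by_cases hpa : p a
    · rw [List.filter_cons_of_pos hpa]
      simpa using ih (fun e he hf => h e (List.mem_cons_of_mem a he) hf)
    · rw [List.filter_cons_of_neg hpa]
      have h1 : d ∣ a := h a List.mem_cons_self (by simpa using hpa)
      have h2 := ih (fun e he hf => h e (List.mem_cons_of_mem a he) hf)
      have : (a :: l).sum - (l.filter p).sum = a + (l.sum - (l.filter p).sum) := by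
        simp; ring
      rw [this]
      exact dvd_add h1 h2

lemma list_abs_sum_le (B : ℤ) :
    ∀ l : List ℤ, (∀ e ∈ l, |e| ≤ B) → |l.sum| ≤ l.length * B := by
  intro l
  induction l with
  | nil => simp
  | cons a l ih =>
    intro h
    have h1 : |a| ≤ B := h a List.mem_cons_self
    have h2 := ih (fun e he => h e (List.mem_cons_of_mem a he))
    calc |(a :: l).sum| = |a + l.sum| := by simp
      _ ≤ |a| + |l.sum| := abs_add_le _ _
      _ ≤ B + l.length * B := add_le_add h1 h2
      _ = (a :: l).length * B := by simp; ring

lemma list_filter_length_lt (p : ℤ → Bool) :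
    ∀ l : List ℤ, ∀ e ∈ l, p e = false → (l.filter p).length < l.length := by
  intro l
  induction l with
  | nil => simp
  | cons a l ih =>
    intro e he hpe
    by_cases hpa : p a
    · rw [List.filter_cons_of_pos hpa]
      have he' : e ∈ l := by
        rcases List.mem_cons.1 he with rfl | h
        · exact absurd hpa (by simp [hpe])
        · exact h
      simpa using Nat.succ_lt_succ (ih e he' hpe)
    · rw [List.filter_cons_of_neg hpa]
      have := List.length_filter_le p l
      simpa using Nat.lt_succ_of_le this

/-- If a sequence of integers is Cauchy in the `g`-adic sense (so it converges in the
`g`-adic integers `ℤ_g = lim← ℤ/g^iℤ`) but its limit is not an integer, then its word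
lengths diverge to infinity. -/
theorem stmt_16 (g : ℤ) (hg : 2 ≤ g) (x : ℕ → ℤ)
    (hcauchy : ∀ N : ℕ, ∃ n₀ : ℕ, ∀ m ≥ n₀, ∀ n ≥ n₀, g ^ N ∣ x m - x n)
    (hnotint : ∀ k : ℤ, ¬ ∀ N : ℕ, ∃ n₀ : ℕ, ∀ n ≥ n₀, g ^ N ∣ x n - k) :
    Filter.Tendsto (fun n => wlen g (x n)) Filter.atTop Filter.atTop := by
  by_contra hT
  rw [Filter.tendsto_atTop_atTop] at hT
  push_neg at hT
  obtain ⟨b, hb⟩ := hT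
  have hg1 : (1:ℤ) < g := by omega
  have hg0 : (0:ℤ) < g := by omega
  choose NN hNN using hcauchy
  set nn : ℕ → ℕ := fun N => (Finset.range (N+1)).sup NN with hnn
  have hnn_ge : ∀ N, NN N ≤ nn N := fun N =>
    Finset.le_sup (Finset.self_mem_range_succ N)
  have hnn_mono : ∀ ⦃N M : ℕ⦄, N ≤ M → nn N ≤ nn M := fun N M h =>
    Finset.sup_mono (Finset.range_subset_range.2 (by omega))
  set r : ℕ → ℤ := fun N => x (nn N) with hr
  have heval : ∀ N, ∀ n, nn N ≤ n → g ^ N ∣ x n - r N := fun N n hn =>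
    hNN N n (le_trans (hnn_ge N) hn) (nn N) (hnn_ge N)
  have hcoh : ∀ N M, N ≤ M → g ^ N ∣ r M - r N := fun N M h =>
    heval N (nn M) (hnn_mono h)
  -- the filtering predicate : keep powers below g^N
  set p : ℕ → ℤ → Bool := fun N e => decide (|e| < g ^ N) with hp
  -- membership after filtering and divisibility of the discarded part
  have hfilter : ∀ N : ℕ, ∀ l : List ℤ, (∀ e ∈ l, e ∈ Sg g) →
      (∀ e ∈ l.filter (p N), ∃ a : ℕ, a < N ∧ (e = g ^ a ∨ e = -g ^ a)) ∧
        g ^ N ∣ l.sum - (l.filter (p N)).sum := by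
    intro N l hl
    constructor
    · intro e he
      rw [List.mem_filter] at he
      obtain ⟨hel, hpe⟩ := he
      obtain ⟨a, ha⟩ := hl e hel
      have habs : |e| = g ^ a := by
        rcases ha with rfl | rfl
        · exact abs_of_nonneg (pow_nonneg hg0.le a)
        · rw [abs_neg]; exact abs_of_nonneg (pow_nonneg hg0.le a)
      have hlt : g ^ a < g ^ N := by
        have := of_decide_eq_true hpe
        rwa [habs] at this
      exact ⟨a, (pow_lt_pow_iff_right₀ hg1).1 hlt, by tauto⟩
    · refine list_dvd_sub_filter _ _ l ?_
      intro e hel hpe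
      obtain ⟨a, ha⟩ := hl e hel
      have habs : |e| = g ^ a := by
        rcases ha with rfl | rfl
        · exact abs_of_nonneg (pow_nonneg hg0.le a)
        · rw [abs_neg]; exact abs_of_nonneg (pow_nonneg hg0.le a)
      have hle : g ^ N ≤ g ^ a := by
        have := of_decide_eq_false hpe
        rw [habs] at this
        omega
      have hNa : N ≤ a := (pow_le_pow_iff_right₀ hg1).1 hle
      have hdvd : g ^ N ∣ g ^ a := pow_dvd_pow g hNa
      rcases ha with rfl | rfl
      · exact hdvd
      · exact hdvd.neg_right
  -- the sets of achievable lengths of short representations of the residues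
  set S : ℕ → Set ℕ := fun N => {c | ∃ l : List ℤ,
      (∀ e ∈ l, ∃ a : ℕ, a < N ∧ (e = g ^ a ∨ e = -g ^ a)) ∧
      l.length = c ∧ g ^ N ∣ r N - l.sum} with hS
  have hSmem : ∀ N, ∃ c ∈ S N, c < b := by
    intro N
    obtain ⟨n, hn, hwl⟩ := hb (nn N)
    have hWne : {m | ∃ l : List ℤ,
        (∀ y ∈ l, y ∈ Sg g) ∧ l.length = m ∧ l.sum = x n}.Nonempty := by
      obtain ⟨l, hl1, hl2⟩ := Sg.rep_any g (x n)
      exact ⟨l.length, l, hl1, rfl, hl2⟩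
    obtain ⟨l, hl1, hl2, hl3⟩ := Nat.sInf_mem hWne
    obtain ⟨hmem, hdvd⟩ := hfilter N l hl1
    refine ⟨(l.filter (p N)).length, ⟨l.filter (p N), hmem, rfl, ?_⟩, ?_⟩
    · have h1 : g ^ N ∣ x n - r N := heval N n hn
      have : r N - (l.filter (p N)).sum =
          -(x n - r N) + (l.sum - (l.filter (p N)).sum) := by rw [hl3]; ring
      rw [this]
      exact dvd_add h1.neg_right hdvd
    · calc (l.filter (p N)).length ≤ l.length := List.length_filter_le _ _
        _ < b := by rw [hl2]; exact hwl
  have hSne : ∀ N, (S N).Nonempty := fun N => by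
    obtain ⟨c, hc, -⟩ := hSmem N; exact ⟨c, hc⟩
  set cN : ℕ → ℕ := fun N => sInf (S N) with hcN
  have hcmem : ∀ N, cN N ∈ S N := fun N => Nat.sInf_mem (hSne N)
  have hclt : ∀ N, cN N < b := by
    intro N
    obtain ⟨c, hc, hcb⟩ := hSmem N
    exact lt_of_le_of_lt (Nat.sInf_le hc) hcb
  -- monotonicity of minimal counts
  have hmono : ∀ N M, N ≤ M → cN N ≤ cN M := by
    intro N M h
    obtain ⟨l, hl1, hl2, hl3⟩ := hcmem M
    have hlSg : ∀ e ∈ l, e ∈ Sg g := by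
      intro e he; obtain ⟨a, -, ha⟩ := hl1 e he; exact ⟨a, ha⟩
    obtain ⟨hmem, hdvd⟩ := hfilter N l hlSg
    have hdvd2 : g ^ N ∣ r N - (l.filter (p N)).sum := by
      have h1 : g ^ N ∣ r M - r N := hcoh N M h
      have h2 : g ^ N ∣ r M - l.sum := dvd_trans (pow_dvd_pow g h) hl3
      have : r N - (l.filter (p N)).sum =
          -(r M - r N) + (r M - l.sum) + (l.sum - (l.filter (p N)).sum) := by ring
      rw [this]
      exact dvd_add (dvd_add h1.neg_right h2) hdvd
    calc cN N ≤ (l.filter (p N)).length := Nat.sInf_le ⟨l.filter (p N), hmem, rfl, hdvd2⟩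
      _ ≤ l.length := List.length_filter_le _ _
      _ = cN M := hl2
  -- the maximum of the minimal counts is attained
  have hbdd : BddAbove (Set.range cN) := ⟨b, by rintro y ⟨N, rfl⟩; exact (hclt N).le⟩
  obtain ⟨N₀, hN₀⟩ := Nat.sSup_mem (Set.range_nonempty cN) hbdd
  have hmax : ∀ N, cN N ≤ cN N₀ := fun N => by
    rw [hN₀]; exact le_csSup hbdd (Set.mem_range_self N)
  -- for levels above N₀, minimal representations use only exponents < N₀
  have hkey : ∀ M, N₀ ≤ M → ∃ l : List ℤ,
      (∀ e ∈ l, ∃ a : ℕ, a < N₀ ∧ (e = g ^ a ∨ e = -g ^ a)) ∧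
      g ^ M ∣ r M - l.sum ∧ |l.sum| ≤ (b : ℤ) * g ^ N₀ := by
    intro M hM
    obtain ⟨l, hl1, hl2, hl3⟩ := hcmem M
    have hlSg : ∀ e ∈ l, e ∈ Sg g := by
      intro e he; obtain ⟨a, -, ha⟩ := hl1 e he; exact ⟨a, ha⟩
    have hall : ∀ e ∈ l, p N₀ e = true := by
      by_contra hcon
      push_neg at hcon
      obtain ⟨e, hel, hpe⟩ := hcon
      have hpe' : p N₀ e = false := by simpa using hpe
      obtain ⟨hmem, hdvd⟩ := hfilter N₀ l hlSg
      have hdvd2 : g ^ N₀ ∣ r N₀ - (l.filter (p N₀)).sum := by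
        have h1 : g ^ N₀ ∣ r M - r N₀ := hcoh N₀ M hM
        have h2 : g ^ N₀ ∣ r M - l.sum := dvd_trans (pow_dvd_pow g hM) hl3
        have : r N₀ - (l.filter (p N₀)).sum =
            -(r M - r N₀) + (r M - l.sum) + (l.sum - (l.filter (p N₀)).sum) := by ring
        rw [this]
        exact dvd_add (dvd_add h1.neg_right h2) hdvd
      have hlt : (l.filter (p N₀)).length < cN M := by
        rw [← hl2]; exact list_filter_length_lt _ l e hel hpe'
      have : cN N₀ < cN N₀ :=
        lt_of_le_of_lt (Nat.sInf_le ⟨l.filter (p N₀), hmem, rfl, hdvd2⟩)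
          (lt_of_lt_of_le hlt (hmax M))
      exact absurd this (lt_irrefl _)
    refine ⟨l, ?_, hl3, ?_⟩
    · intro e he
      obtain ⟨a, -, ha⟩ := hl1 e he
      have habs : |e| = g ^ a := by
        rcases ha with rfl | rfl
        · exact abs_of_nonneg (pow_nonneg hg0.le a)
        · rw [abs_neg]; exact abs_of_nonneg (pow_nonneg hg0.le a)
      have hlt : g ^ a < g ^ N₀ := by
        have := of_decide_eq_true (hall e he)
        rwa [habs] at this
      exact ⟨a, (pow_lt_pow_iff_right₀ hg1).1 hlt, ha⟩
    · have hB : ∀ e ∈ l, |e| ≤ g ^ N₀ := by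
        intro e he
        exact (of_decide_eq_true (hall e he)).le
      calc |l.sum| ≤ (l.length : ℤ) * g ^ N₀ := list_abs_sum_le _ l hB
        _ ≤ (b : ℤ) * g ^ N₀ := by
            apply mul_le_mul_of_nonneg_right _ (pow_nonneg hg0.le N₀)
            exact_mod_cast (by rw [hl2]; exact (hclt M).le : l.length ≤ b)
  -- the threshold level
  set M₁ : ℕ := N₀ + (b + 1) with hM₁def
  have hM₁ : N₀ ≤ M₁ := by omega
  obtain ⟨l₁, hl₁e, hl₁d, hl₁b⟩ := hkey M₁ hM₁
  set k : ℤ := l₁.sum with hk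
  have hbig : 2 * (b : ℤ) * g ^ N₀ < g ^ M₁ := by
    have h1 : (b : ℤ) < 2 ^ b := by exact_mod_cast Nat.lt_two_pow_self (n := b)
    have h2 : (2 : ℤ) ^ (b + 1) ≤ g ^ (b + 1) := pow_le_pow_left₀ (by norm_num) hg (b + 1)
    have h3 : (0 : ℤ) < g ^ N₀ := pow_pos hg0 N₀
    have h4 : 2 * (b : ℤ) < 2 ^ (b + 1) := by
      rw [pow_succ]; nlinarith
    calc 2 * (b : ℤ) * g ^ N₀ < 2 ^ (b + 1) * g ^ N₀ :=
          mul_lt_mul_of_pos_right h4 h3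
      _ ≤ g ^ (b + 1) * g ^ N₀ := mul_le_mul_of_nonneg_right h2 h3.le
      _ = g ^ M₁ := by rw [← pow_add, hM₁def]; ring_nf
  -- the sums stabilise at the value k
  have hstable : ∀ N, M₁ ≤ N → g ^ N ∣ r N - k := by
    intro N hN
    obtain ⟨l₂, hl₂e, hl₂d, hl₂b⟩ := hkey N (le_trans hM₁ hN)
    have hdvd : g ^ M₁ ∣ l₂.sum - k := by
      have h1 : g ^ M₁ ∣ r N - l₂.sum := dvd_trans (pow_dvd_pow g hN) hl₂d
      have h2 : g ^ M₁ ∣ r N - r M₁ := hcoh M₁ N hN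
      have h3 : g ^ M₁ ∣ r M₁ - k := hl₁d
      have : l₂.sum - k = -(r N - l₂.sum) + (r N - r M₁) + (r M₁ - k) := by ring
      rw [this]
      exact dvd_add (dvd_add h1.neg_right h2) h3
    have habs : |l₂.sum - k| < g ^ M₁ := by
      calc |l₂.sum - k| ≤ |l₂.sum| + |k| := abs_sub _ _
        _ ≤ (b : ℤ) * g ^ N₀ + (b : ℤ) * g ^ N₀ := add_le_add hl₂b hl₁b
        _ = 2 * (b : ℤ) * g ^ N₀ := by ring
        _ < g ^ M₁ := hbig
    have : l₂.sum - k = 0 := Int.eq_zero_of_abs_lt_dvd hdvd habs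
    have hsum : l₂.sum = k := by omega
    rwa [hsum] at hl₂d
  -- conclusion : x converges g-adically to the integer k, contradiction
  apply hnotint k
  intro N
  refine ⟨nn (max N M₁), fun n hn => ?_⟩
  have h1 : g ^ (max N M₁) ∣ x n - r (max N M₁) := heval _ n hn
  have h2 : g ^ (max N M₁) ∣ r (max N M₁) - k := hstable _ (le_max_right N M₁)
  have h3 : g ^ (max N M₁) ∣ x n - k := by
    have : x n - k = (x n - r (max N M₁)) + (r (max N M₁) - k) := by ring
    rw [this]; exact dvd_add h1 h2
  exact dvd_trans (pow_dvd_pow g (le_max_left N M₁)) h3
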